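/- Let l > 0 be real. For every z ∈ ℂ with Im z > 0 one has 1 + e^{izl} ≠ 0 and Im( i·(1 − e^{izl})/(1 + e^{izl}) ) > 0; moreover at z = i the function takes the value i·(1 − e^{−l})/(1 + e^{−l}), i.e., i·(1 − κ)/(1 + κ) with κ = e^{−l} ∈ (0, 1). -/

import Mathlib

/-- For `l > 0`, the function `V(z) = i(1 - e^{izl})/(1 + e^{izl})` has
nonvanishing denominator on the open upper half-plane and maps it into
itself; moreover `V(i) = i(1 - e^{-l})/(1 + e^{-l})`, i.e.
`V(i) = i(1 - κ)/(1 + κ)` with `κ = e^{-l} ∈ (0, 1)`. -/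
theorem stmt_18 (l : ℝ) (hl : 0 < l) :
    (∀ z : ℂ, 0 < z.im →
      1 + Complex.exp (Complex.I * z * (l : ℂ)) ≠ 0 ∧
      0 < (Complex.I * (1 - Complex.exp (Complex.I * z * (l : ℂ))) /
        (1 + Complex.exp (Complex.I * z * (l : ℂ)))).im) ∧
    Complex.I * (1 - Complex.exp (Complex.I * Complex.I * (l : ℂ))) /
      (1 + Complex.exp (Complex.I * Complex.I * (l : ℂ))) =
      Complex.I * (((1 - Real.exp (-l)) / (1 + Real.exp (-l)) : ℝ) : ℂ) ∧
    Real.exp (-l) ∈ Set.Ioo (0 : ℝ) 1 := by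
  have key : ∀ w : ℂ, ‖w‖ < 1 →
      (1 + w ≠ 0 ∧ 0 < (Complex.I * (1 - w) / (1 + w)).im) := by
    intro w hw
    have hne : 1 + w ≠ 0 := by
      intro h
      have : w = -1 := by linear_combination h
      rw [this] at hw; simp at hw
    refine ⟨hne, ?_⟩
    have hns : 0 < Complex.normSq (1 + w) := by
      rwa [Complex.normSq_pos]
    have hlt : Complex.normSq w < 1 := by
      have := Complex.sq_norm w
      nlinarith [norm_nonneg w]
    rw [Complex.div_im]
    have h1 : (Complex.I * (1 - w)).im = 1 - w.re := by simp
    have h2 : (Complex.I * (1 - w)).re = w.im := by simp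
    rw [h1, h2]
    have : (1 - w.re) * (1 + w).re - w.im * (1 + w).im = 1 - Complex.normSq w := by
      simp [Complex.normSq_apply]; ring
    have hpos : 0 < (1 - w.re) * (1 + w).re - w.im * (1 + w).im := by
      rw [this]; linarith
    have := div_pos hpos hns
    calc (0:ℝ) < ((1 - w.re) * (1 + w).re - w.im * (1 + w).im) / Complex.normSq (1 + w) := this
      _ = _ := by ring
  refine ⟨fun z hz => ?_, ?_, Real.exp_pos _, Real.exp_lt_one_iff.2 (by linarith)⟩
  · apply key
    rw [Complex.norm_exp]
    have hre : (Complex.I * z * (l : ℂ)).re = -z.im * l := by simp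
    rw [hre]
    exact Real.exp_lt_one_iff.2 (by nlinarith)
  · have he : Complex.I * Complex.I * (l : ℂ) = ((-l : ℝ) : ℂ) := by
      simp [Complex.I_mul_I]
    rw [he, ← Complex.ofReal_exp]
    have hd : (1 : ℂ) + (Real.exp (-l) : ℂ) ≠ 0 := by
      have : (0:ℝ) < 1 + Real.exp (-l) := by positivity
      exact_mod_cast (by push_cast; exact_mod_cast this.ne' : ((1 + Real.exp (-l) : ℝ) : ℂ) ≠ 0)
    field_simp
    rw [Complex.ofReal_div, Complex.ofReal_sub, Complex.ofReal_add, Complex.ofReal_one]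
    field_simp
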